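/- arXiv:0708.0512 — 4 statements merged into one kernel-verified Lean document; each statement's English description precedes it below -/
import Mathlib

section
/- Let M(S) be the set of equivalent martingale measures for a strictly positive bounded ℝ^d-valued discrete-time process (S_t)_{t=0,…,T} adapted to (F_t), with S¹ ≡ 1. If Q, Q¹, …, Q^k ∈ M(S), τ-fixed time t ∈ {0,…,T}, F_t¹,…,F_t^k is an F_t-measurable partition of Ω, and Z, Z¹,…,Z^k are the densities with Z^i > 0, then the measure ℝ with density Y = Σ_i 1_{F_t^i} (Z_t / Z_t^i) Z^i is again in M(S), where Z_t = E[Z|F_t]. -/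
open MeasureTheory Filter
open scoped ENNReal

/-- `Z` is the density (w.r.t. `P`) of an equivalent martingale measure for the
`d`-dimensional price process `S` over times `0,…,T`. -/
def IsEMMDensity {Ω : Type} {mΩ : MeasurableSpace Ω} (P : Measure Ω)
    (ℱ : Filtration ℕ mΩ) (T d : ℕ) (S : ℕ → Ω → Fin d → ℝ) (Z : Ω → ℝ) : Prop :=
  Integrable Z P ∧ (∀ᵐ ω ∂P, 0 < Z ω) ∧ (∫ ω, Z ω ∂P = 1) ∧
  ∀ i : Fin d, ∀ s t : ℕ, s ≤ t → t ≤ T →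
    (P.withDensity fun ω => ENNReal.ofReal (Z ω))[(fun ω => S t ω i) | ℱ s]
      =ᵐ[P] fun ω => S s ω i

section Aux

variable {Ω : Type} {mΩ : MeasurableSpace Ω} {P : Measure Ω} [IsProbabilityMeasure P]

lemma aux_condexp_pos {ℱ : Filtration ℕ mΩ} {t : ℕ} {Z : Ω → ℝ}
    (hint : Integrable Z P) (hpos : ∀ᵐ ω ∂P, 0 < Z ω) :
    ∀ᵐ ω ∂P, 0 < (P[Z|ℱ t]) ω := by
  have hfm : StronglyMeasurable[ℱ t] (P[Z|ℱ t]) := stronglyMeasurable_condExp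
  set A : Set Ω := (fun ω => (P[Z|ℱ t]) ω) ⁻¹' Set.Iic 0 with hAdef
  have hA : MeasurableSet[ℱ t] A := hfm.measurable measurableSet_Iic
  have hA0 : MeasurableSet[mΩ] A := (ℱ.le t) A hA
  have h1 : ∫ ω in A, (P[Z|ℱ t]) ω ∂P = ∫ ω in A, Z ω ∂P := setIntegral_condExp (ℱ.le t) hint hA
  have h2 : ∫ ω in A, (P[Z|ℱ t]) ω ∂P ≤ 0 :=
    setIntegral_nonpos_of_ae_restrict ((ae_restrict_mem hA0).mono fun ω hω => hω)
  have hPA : P A = 0 := by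
    by_contra hne
    have hsupp : 0 < P (Function.support Z ∩ A) := by
      have hdiff : P (A \ Function.support Z) = 0 := by
        refine measure_eq_zero_iff_ae_notMem.mpr ?_
        filter_upwards [hpos] with ω hω
        exact fun hmem => hmem.2 (ne_of_gt hω)
      have hle : P A ≤ P (Function.support Z ∩ A) := by
        calc P A ≤ P (A ∩ Function.support Z) + P (A \ Function.support Z) :=
              measure_le_inter_add_diff P A (Function.support Z)
          _ = P (Function.support Z ∩ A) := by rw [hdiff, add_zero, Set.inter_comm]
      exact lt_of_lt_of_le (pos_iff_ne_zero.mpr hne) hle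
    have h3 : 0 < ∫ ω in A, Z ω ∂P :=
      (setIntegral_pos_iff_support_of_nonneg_ae
        (ae_restrict_of_ae (hpos.mono fun ω h => h.le)) hint.integrableOn).mpr hsupp
    rw [h1] at h2
    linarith
  have := measure_eq_zero_iff_ae_notMem.mp hPA
  filter_upwards [this] with ω hω
  exact lt_of_not_ge hω

lemma aux_trim {ℱ : Filtration ℕ mΩ} {t : ℕ} {Z : Ω → ℝ}
    (hint : Integrable Z P) (hpos : 0 ≤ᵐ[P] Z) :
    (P.withDensity fun ω => ENNReal.ofReal (Z ω)).trim (ℱ.le t)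
      = (P.withDensity fun ω => ENNReal.ofReal ((P[Z|ℱ t]) ω)).trim (ℱ.le t) := by
  refine @Measure.ext Ω (ℱ t) _ _ fun A hA => ?_
  have hA0 : MeasurableSet[mΩ] A := (ℱ.le t) A hA
  have e1 : (P.withDensity fun ω => ENNReal.ofReal (Z ω)) A
      = ENNReal.ofReal (∫ ω in A, Z ω ∂P) := by
    rw [withDensity_apply _ hA0,
      ← ofReal_integral_eq_lintegral_ofReal hint.integrableOn (ae_restrict_of_ae hpos)]
  have e2 : (P.withDensity fun ω => ENNReal.ofReal ((P[Z|ℱ t]) ω)) A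
      = ENNReal.ofReal (∫ ω in A, (P[Z|ℱ t]) ω ∂P) := by
    rw [withDensity_apply _ hA0,
      ← ofReal_integral_eq_lintegral_ofReal integrable_condExp.integrableOn
        (ae_restrict_of_ae (condExp_nonneg hpos))]
  rw [trim_measurableSet_eq (ℱ.le t) hA, trim_measurableSet_eq (ℱ.le t) hA, e1, e2,
    setIntegral_condExp (ℱ.le t) hint hA]

lemma aux_lint_condexp {ℱ : Filtration ℕ mΩ} {t : ℕ} {Z : Ω → ℝ}
    (hint : Integrable Z P) (hpos : 0 ≤ᵐ[P] Z) {h : Ω → ℝ≥0∞} (hh : Measurable[ℱ t] h) :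
    ∫⁻ ω, h ω * ENNReal.ofReal (Z ω) ∂P = ∫⁻ ω, h ω * ENNReal.ofReal ((P[Z|ℱ t]) ω) ∂P := by
  have hZae : AEMeasurable (fun ω => ENNReal.ofReal (Z ω)) P :=
    hint.aemeasurable.ennreal_ofReal
  have hcme : Measurable fun ω => ENNReal.ofReal ((P[Z|ℱ t]) ω) :=
    (((stronglyMeasurable_condExp (m := ℱ t) (μ := P) (f := Z)).mono (ℱ.le t)).measurable).ennreal_ofReal
  have hhm : Measurable h := hh.mono (ℱ.le t) le_rfl
  calc ∫⁻ ω, h ω * ENNReal.ofReal (Z ω) ∂P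
      = ∫⁻ ω, h ω ∂(P.withDensity fun ω => ENNReal.ofReal (Z ω)) := by
        rw [lintegral_withDensity_eq_lintegral_mul₀' hZae hhm.aemeasurable]
        exact lintegral_congr fun ω => mul_comm _ _
    _ = ∫⁻ ω, h ω ∂((P.withDensity fun ω => ENNReal.ofReal (Z ω)).trim (ℱ.le t)) :=
        (lintegral_trim (ℱ.le t) hh).symm
    _ = ∫⁻ ω, h ω ∂((P.withDensity fun ω => ENNReal.ofReal ((P[Z|ℱ t]) ω)).trim (ℱ.le t)) := by
        rw [aux_trim hint hpos]
    _ = ∫⁻ ω, h ω ∂(P.withDensity fun ω => ENNReal.ofReal ((P[Z|ℱ t]) ω)) :=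
        lintegral_trim (ℱ.le t) hh
    _ = ∫⁻ ω, h ω * ENNReal.ofReal ((P[Z|ℱ t]) ω) ∂P := by
        rw [lintegral_withDensity_eq_lintegral_mul _ hcme hhm]
        exact lintegral_congr fun ω => mul_comm _ _

omit [IsProbabilityMeasure P] in
lemma aux_int {f : Ω → ℝ} (hf : StronglyMeasurable f) (hb : MemLp f ⊤ P)
    {Q : Measure Ω} [IsFiniteMeasure Q] (hQP : Q ≪ P) : Integrable f Q := by
  have hlt : eLpNormEssSup f P < ⊤ := by
    have := hb.2; rwa [eLpNorm_exponent_top] at this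
  have hbd : ∀ᵐ ω ∂P, ‖f ω‖ ≤ (eLpNormEssSup f P).toReal := by
    filter_upwards [ae_le_eLpNormEssSup (f := f) (μ := P)] with ω hω
    calc ‖f ω‖ = ((‖f ω‖₊ : ℝ≥0∞)).toReal := by simp
      _ ≤ _ := ENNReal.toReal_mono hlt.ne hω
  exact (memLp_top_of_bound hf.aestronglyMeasurable _
    (hbd.filter_mono hQP.ae_le)).integrable le_top

omit [IsProbabilityMeasure P] in
lemma aux_finite {Z : Ω → ℝ} (hint : Integrable Z P) (hpos : 0 ≤ᵐ[P] Z)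
    (hone : ∫ ω, Z ω ∂P = 1) :
    IsFiniteMeasure (P.withDensity fun ω => ENNReal.ofReal (Z ω)) := by
  constructor
  rw [withDensity_apply _ MeasurableSet.univ, Measure.restrict_univ,
    ← ofReal_integral_eq_lintegral_ofReal hint hpos, hone]
  exact ENNReal.ofReal_lt_top

lemma aux_mart {ℱ : Filtration ℕ mΩ} {T d : ℕ} {S : ℕ → Ω → Fin d → ℝ}
    (hSbdd : ∀ t, t ≤ T → ∀ i, MemLp (fun ω => S t ω i) ⊤ P)
    (hSpos : ∀ t, t ≤ T → ∀ i, ∀ᵐ ω ∂P, 0 < S t ω i)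
    (hSadapted : ∀ t, t ≤ T → ∀ i, Measurable[ℱ t] (fun ω => S t ω i))
    {Z : Ω → ℝ} (hZ : IsEMMDensity P ℱ T d S Z) (j : Fin d) {s u : ℕ}
    (hsu : s ≤ u) (hu : u ≤ T) {h : Ω → ℝ≥0∞} (hh : Measurable[ℱ s] h) :
    ∫⁻ ω, h ω * ENNReal.ofReal (S u ω j) ∂(P.withDensity fun ω => ENNReal.ofReal (Z ω))
      = ∫⁻ ω, h ω * ENNReal.ofReal (S s ω j)
          ∂(P.withDensity fun ω => ENNReal.ofReal (Z ω)) := by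
  set Q : Measure Ω := P.withDensity fun ω => ENNReal.ofReal (Z ω) with hQdef
  haveI : IsFiniteMeasure Q := aux_finite hZ.1 (hZ.2.1.mono fun ω hω => hω.le) hZ.2.2.1
  have hQP : Q ≪ P := withDensity_absolutelyContinuous _ _
  have hSint : ∀ v, v ≤ T → Integrable (fun ω => S v ω j) Q := fun v hv =>
    aux_int (((hSadapted v hv j).mono (ℱ.le v) le_rfl).stronglyMeasurable)
      (hSbdd v hv j) hQP
  have hSnn : ∀ v, v ≤ T → 0 ≤ᵐ[Q] fun ω => S v ω j := fun v hv =>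
    (((hSpos v hv j).mono fun ω hω => hω.le).filter_mono hQP.ae_le)
  have hSm : ∀ v, v ≤ T → Measurable fun ω => ENNReal.ofReal (S v ω j) := fun v hv =>
    ((hSadapted v hv j).mono (ℱ.le v) le_rfl).ennreal_ofReal
  have hhm : Measurable h := hh.mono (ℱ.le s) le_rfl
  have htrim : (Q.withDensity fun ω => ENNReal.ofReal (S u ω j)).trim (ℱ.le s)
      = (Q.withDensity fun ω => ENNReal.ofReal (S s ω j)).trim (ℱ.le s) := by
    refine @Measure.ext Ω (ℱ s) _ _ fun A hA => ?_
    have hA0 : MeasurableSet[mΩ] A := ℱ.le s A hA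
    have e1 : (Q.withDensity fun ω => ENNReal.ofReal (S u ω j)) A
        = ENNReal.ofReal (∫ ω in A, S u ω j ∂Q) := by
      rw [withDensity_apply _ hA0,
        ← ofReal_integral_eq_lintegral_ofReal (hSint u hu).integrableOn
          (ae_restrict_of_ae (hSnn u hu))]
    have e2 : (Q.withDensity fun ω => ENNReal.ofReal (S s ω j)) A
        = ENNReal.ofReal (∫ ω in A, S s ω j ∂Q) := by
      rw [withDensity_apply _ hA0,
        ← ofReal_integral_eq_lintegral_ofReal (hSint s (hsu.trans hu)).integrableOn
          (ae_restrict_of_ae (hSnn s (hsu.trans hu)))]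
    rw [trim_measurableSet_eq (ℱ.le s) hA, trim_measurableSet_eq (ℱ.le s) hA, e1, e2,
      ← setIntegral_condExp (ℱ.le s) (hSint u hu) hA]
    congr 1
    refine setIntegral_congr_ae hA0 ?_
    have hmart := hZ.2.2.2 j s u hsu hu
    exact (hQP.ae_eq hmart).mono fun ω hω _ => hω
  calc ∫⁻ ω, h ω * ENNReal.ofReal (S u ω j) ∂Q
      = ∫⁻ ω, h ω ∂(Q.withDensity fun ω => ENNReal.ofReal (S u ω j)) := by
        rw [lintegral_withDensity_eq_lintegral_mul _ (hSm u hu) hhm]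
        exact lintegral_congr fun ω => mul_comm _ _
    _ = ∫⁻ ω, h ω ∂((Q.withDensity fun ω => ENNReal.ofReal (S u ω j)).trim (ℱ.le s)) :=
        (lintegral_trim _ hh).symm
    _ = ∫⁻ ω, h ω ∂((Q.withDensity fun ω => ENNReal.ofReal (S s ω j)).trim (ℱ.le s)) := by
        rw [htrim]
    _ = ∫⁻ ω, h ω ∂(Q.withDensity fun ω => ENNReal.ofReal (S s ω j)) := lintegral_trim _ hh
    _ = ∫⁻ ω, h ω * ENNReal.ofReal (S s ω j) ∂Q := by
        rw [lintegral_withDensity_eq_lintegral_mul _ (hSm s (hsu.trans hu)) hhm]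
        exact lintegral_congr fun ω => mul_comm _ _

end Aux
/-- `M(S)` is weakly m-stable: pasting densities `Zⁱ` of EMMs over an
`F_t`-partition with weights `Z_t/Z_tⁱ` yields the density of an EMM. -/
theorem stmt11 {Ω : Type} {mΩ : MeasurableSpace Ω} (P : Measure Ω) [IsProbabilityMeasure P]
    (ℱ : Filtration ℕ mΩ) (T d : ℕ) (hd : 0 < d)
    (S : ℕ → Ω → Fin d → ℝ)
    (hSbdd : ∀ t, t ≤ T → ∀ i, MemLp (fun ω => S t ω i) ⊤ P)
    (hSpos : ∀ t, t ≤ T → ∀ i, ∀ᵐ ω ∂P, 0 < S t ω i)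
    (hSadapted : ∀ t, t ≤ T → ∀ i, Measurable[ℱ t] (fun ω => S t ω i))
    (hS1 : ∀ t, t ≤ T → ∀ ω, S t ω ⟨0, hd⟩ = 1)
    (t : ℕ) (ht : t ≤ T) (k : ℕ)
    (F : Fin k → Set Ω) (hFmeas : ∀ i, MeasurableSet[ℱ t] (F i))
    (hFdisj : Pairwise (Function.onFun Disjoint F))
    (hFcover : (⋃ i, F i) = Set.univ)
    (Z : Ω → ℝ) (hZ : IsEMMDensity P ℱ T d S Z)
    (Z' : Fin k → Ω → ℝ) (hZ' : ∀ i, IsEMMDensity P ℱ T d S (Z' i)) :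
    -- conclusion: Y = Σᵢ 1_{Fᵢ} (Z_t / Z_tⁱ) Zⁱ is again the density of an EMM
    IsEMMDensity P ℱ T d S (fun ω => ∑ i, (F i).indicator
      (fun ω => (P[Z | ℱ t]) ω / (P[Z' i | ℱ t]) ω * Z' i ω) ω) := by
  classical
  have hZint : Integrable Z P := hZ.1
  have hZpos := hZ.2.1
  have hZone := hZ.2.2.1
  have hZ'int : ∀ i, Integrable (Z' i) P := fun i => (hZ' i).1
  set Y : Ω → ℝ := fun ω => ∑ i, (F i).indicator
      (fun ω => (P[Z | ℱ t]) ω / (P[Z' i | ℱ t]) ω * Z' i ω) ω with hYdef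
  have hZcpos : ∀ᵐ ω ∂P, 0 < (P[Z|ℱ t]) ω := aux_condexp_pos hZint hZpos
  have hZc'pos : ∀ᵐ ω ∂P, ∀ i, 0 < (P[Z' i|ℱ t]) ω :=
    ae_all_iff.mpr fun i => aux_condexp_pos (hZ' i).1 (hZ' i).2.1
  have hZ'posall : ∀ᵐ ω ∂P, ∀ i, 0 < Z' i ω := ae_all_iff.mpr fun i => (hZ' i).2.1
  set G : Fin k → Ω → ℝ≥0∞ := fun i => (F i).indicator
      (fun ω => ENNReal.ofReal ((P[Z|ℱ t]) ω / (P[Z' i|ℱ t]) ω)) with hGdef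
  have hGmeas : ∀ i, Measurable[ℱ t] (G i) := fun i =>
    Measurable.indicator
      ((stronglyMeasurable_condExp.measurable.div
        stronglyMeasurable_condExp.measurable).ennreal_ofReal) (hFmeas i)
  have hGmeas0 : ∀ i, Measurable (G i) := fun i => (hGmeas i).mono (ℱ.le t) le_rfl
  have hYsm : AEStronglyMeasurable Y P := by
    refine Finset.aestronglyMeasurable_fun_sum _ fun i _ => ?_
    refine AEStronglyMeasurable.indicator ?_ (ℱ.le t _ (hFmeas i))
    exact (((stronglyMeasurable_condExp.mono (ℱ.le t)).measurable.div
      ((stronglyMeasurable_condExp.mono (ℱ.le t)).measurable)).aestronglyMeasurable).mul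
      (hZ'int i).1
  have hYnn : 0 ≤ᵐ[P] Y := by
    filter_upwards [hZcpos, hZc'pos, hZ'posall] with ω h1 h2 h3
    refine Finset.sum_nonneg fun i _ => ?_
    by_cases hω : ω ∈ F i
    · rw [Set.indicator_of_mem hω]
      exact mul_nonneg (div_nonneg h1.le (h2 i).le) (h3 i).le
    · rw [Set.indicator_of_notMem hω]
  have hYae : (fun ω => ENNReal.ofReal (Y ω)) =ᵐ[P]
      (fun ω => ∑ i, G i ω * ENNReal.ofReal (Z' i ω)) := by
    filter_upwards [hZcpos, hZc'pos, hZ'posall] with ω h1 h2 h3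
    have hnn : ∀ i ∈ Finset.univ, 0 ≤ (F i).indicator
        (fun ω => (P[Z|ℱ t]) ω / (P[Z' i|ℱ t]) ω * Z' i ω) ω := by
      intro i _
      by_cases hω : ω ∈ F i
      · rw [Set.indicator_of_mem hω]
        exact mul_nonneg (div_nonneg h1.le (h2 i).le) (h3 i).le
      · rw [Set.indicator_of_notMem hω]
    calc ENNReal.ofReal (Y ω)
        = ∑ i, ENNReal.ofReal ((F i).indicator
            (fun ω => (P[Z|ℱ t]) ω / (P[Z' i|ℱ t]) ω * Z' i ω) ω) := by
          simp only [hYdef]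
          exact ENNReal.ofReal_sum_of_nonneg hnn
      _ = ∑ i, G i ω * ENNReal.ofReal (Z' i ω) := by
          refine Finset.sum_congr rfl fun i _ => ?_
          by_cases hω : ω ∈ F i
          · simp only [hGdef, Set.indicator_of_mem hω]
            rw [ENNReal.ofReal_mul (div_nonneg h1.le (h2 i).le)]
          · simp only [hGdef, Set.indicator_of_notMem hω, ENNReal.ofReal_zero, zero_mul]
  have hGZ' : ∀ i, (fun ω => G i ω * ENNReal.ofReal ((P[Z' i|ℱ t]) ω)) =ᵐ[P]
      (fun ω => (F i).indicator (fun ω => ENNReal.ofReal ((P[Z|ℱ t]) ω)) ω) := by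
    intro i
    filter_upwards [hZcpos, hZc'pos] with ω h1 h2
    by_cases hω : ω ∈ F i
    · simp only [hGdef, Set.indicator_of_mem hω]
      rw [← ENNReal.ofReal_mul (div_nonneg h1.le (h2 i).le), div_mul_cancel₀ _ (h2 i).ne']
    · simp only [hGdef, Set.indicator_of_notMem hω, zero_mul]
  have hsumInd : ∀ (g : Ω → ℝ≥0∞) (ω : Ω), (∑ i, (F i).indicator g ω) = g ω := by
    intro g ω
    have hω : ω ∈ ⋃ i, F i := by rw [hFcover]; exact Set.mem_univ ω
    obtain ⟨i, hi⟩ := Set.mem_iUnion.mp hω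
    rw [Finset.sum_eq_single_of_mem i (Finset.mem_univ i), Set.indicator_of_mem hi]
    intro j _ hji
    exact Set.indicator_of_notMem (fun hj => Set.disjoint_left.mp (hFdisj hji) hj hi) g
  set Qi : Fin k → Measure Ω := fun i => P.withDensity fun ω => ENNReal.ofReal (Z' i ω)
    with hQidef
  set Q : Measure Ω := P.withDensity fun ω => ENNReal.ofReal (Z ω) with hQdef
  set QY : Measure Ω := P.withDensity fun ω => ENNReal.ofReal (Y ω) with hQYdef
  have H1 : ∀ w : Ω → ℝ≥0∞, Measurable w →
      ∫⁻ ω, w ω ∂QY = ∑ i, ∫⁻ ω, G i ω * w ω ∂(Qi i) := by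
    intro w hw
    have hYm : AEMeasurable (fun ω => ENNReal.ofReal (Y ω)) P :=
      hYsm.aemeasurable.ennreal_ofReal
    calc ∫⁻ ω, w ω ∂QY = ∫⁻ ω, ENNReal.ofReal (Y ω) * w ω ∂P := by
          simp only [hQYdef]
          rw [lintegral_withDensity_eq_lintegral_mul₀' hYm hw.aemeasurable]
          exact lintegral_congr fun ω => rfl
      _ = ∫⁻ ω, ∑ i, G i ω * ENNReal.ofReal (Z' i ω) * w ω ∂P := by
          refine lintegral_congr_ae ?_
          filter_upwards [hYae] with ω hω
          rw [hω, Finset.sum_mul]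
      _ = ∑ i, ∫⁻ ω, G i ω * ENNReal.ofReal (Z' i ω) * w ω ∂P := by
          refine lintegral_finset_sum' _ fun i _ => ?_
          exact ((hGmeas0 i).aemeasurable.mul
            ((hZ'int i).aemeasurable.ennreal_ofReal)).mul hw.aemeasurable
      _ = ∑ i, ∫⁻ ω, G i ω * w ω ∂(Qi i) := by
          refine Finset.sum_congr rfl fun i _ => ?_
          simp only [hQidef]
          rw [lintegral_withDensity_eq_lintegral_mul₀'
            ((hZ'int i).aemeasurable.ennreal_ofReal) (g := fun ω => G i ω * w ω) ((hGmeas0 i).mul hw).aemeasurable]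
          exact lintegral_congr fun ω => by
            show G i ω * ENNReal.ofReal (Z' i ω) * w ω
              = ENNReal.ofReal (Z' i ω) * (G i ω * w ω)
            ring
  have H2 : ∀ w : Ω → ℝ≥0∞, Measurable[ℱ t] w →
      ∑ i, ∫⁻ ω, G i ω * w ω ∂(Qi i) = ∫⁻ ω, w ω ∂Q := by
    intro w hw
    have hw0 : Measurable w := hw.mono (ℱ.le t) le_rfl
    have hIndMeas : ∀ i, Measurable
        ((F i).indicator (fun ω => ENNReal.ofReal ((P[Z|ℱ t]) ω))) := fun i =>
      (((stronglyMeasurable_condExp.mono (ℱ.le t)).measurable).ennreal_ofReal).indicator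
        (ℱ.le t _ (hFmeas i))
    have step1 : ∀ i, ∫⁻ ω, G i ω * w ω ∂(Qi i)
        = ∫⁻ ω, (F i).indicator (fun ω => ENNReal.ofReal ((P[Z|ℱ t]) ω)) ω * w ω ∂P := by
      intro i
      calc ∫⁻ ω, G i ω * w ω ∂(Qi i)
          = ∫⁻ ω, (fun ω => G i ω * w ω) ω * ENNReal.ofReal (Z' i ω) ∂P := by
            simp only [hQidef]
            rw [lintegral_withDensity_eq_lintegral_mul₀'
              ((hZ'int i).aemeasurable.ennreal_ofReal) (g := fun ω => G i ω * w ω) ((hGmeas0 i).mul hw0).aemeasurable]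
            exact lintegral_congr fun ω => mul_comm _ _
        _ = ∫⁻ ω, (fun ω => G i ω * w ω) ω * ENNReal.ofReal ((P[Z' i|ℱ t]) ω) ∂P :=
            aux_lint_condexp (hZ'int i) ((hZ' i).2.1.mono fun ω h => h.le)
              ((hGmeas i).mul hw)
        _ = ∫⁻ ω, (F i).indicator (fun ω => ENNReal.ofReal ((P[Z|ℱ t]) ω)) ω * w ω ∂P := by
            refine lintegral_congr_ae ?_
            filter_upwards [hGZ' i] with ω hω
            calc G i ω * w ω * ENNReal.ofReal ((P[Z' i|ℱ t]) ω)
                = G i ω * ENNReal.ofReal ((P[Z' i|ℱ t]) ω) * w ω := by ring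
              _ = (F i).indicator (fun ω => ENNReal.ofReal ((P[Z|ℱ t]) ω)) ω * w ω := by
                  rw [hω]
    calc ∑ i, ∫⁻ ω, G i ω * w ω ∂(Qi i)
        = ∑ i, ∫⁻ ω, (F i).indicator (fun ω => ENNReal.ofReal ((P[Z|ℱ t]) ω)) ω * w ω ∂P :=
          Finset.sum_congr rfl fun i _ => step1 i
      _ = ∫⁻ ω, ∑ i, (F i).indicator (fun ω => ENNReal.ofReal ((P[Z|ℱ t]) ω)) ω * w ω ∂P :=
          (lintegral_finset_sum' _ fun i _ => ((hIndMeas i).mul hw0).aemeasurable).symm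
      _ = ∫⁻ ω, ENNReal.ofReal ((P[Z|ℱ t]) ω) * w ω ∂P := by
          refine lintegral_congr fun ω => ?_
          rw [← Finset.sum_mul, hsumInd]
      _ = ∫⁻ ω, w ω * ENNReal.ofReal ((P[Z|ℱ t]) ω) ∂P :=
          lintegral_congr fun ω => mul_comm _ _
      _ = ∫⁻ ω, w ω * ENNReal.ofReal (Z ω) ∂P :=
          (aux_lint_condexp hZint (hZpos.mono fun ω h => h.le) hw).symm
      _ = ∫⁻ ω, w ω ∂Q := by
          simp only [hQdef]
          rw [lintegral_withDensity_eq_lintegral_mul₀'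
            (hZint.aemeasurable.ennreal_ofReal) hw0.aemeasurable]
          exact lintegral_congr fun ω => mul_comm _ _
  have htot : ∫⁻ ω, ENNReal.ofReal (Y ω) ∂P = 1 := by
    have h1 : ∫⁻ _ω, (1:ℝ≥0∞) ∂QY = ∫⁻ ω, ENNReal.ofReal (Y ω) ∂P := by
      rw [lintegral_one]
      simp only [hQYdef]
      rw [withDensity_apply _ MeasurableSet.univ, Measure.restrict_univ]
    have h2 : ∫⁻ _ω, (1:ℝ≥0∞) ∂Q = 1 := by
      rw [lintegral_one]
      simp only [hQdef]
      rw [withDensity_apply _ MeasurableSet.univ, Measure.restrict_univ,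
        ← ofReal_integral_eq_lintegral_ofReal hZint (hZpos.mono fun ω h => h.le), hZone,
        ENNReal.ofReal_one]
    have h3 := H1 (fun _ => 1) measurable_const
    have h4 := H2 (fun _ => 1) measurable_const
    rw [← h1, h3, h4, h2]
  have hYint : Integrable Y P := by
    refine ⟨hYsm, ?_⟩
    rw [hasFiniteIntegral_iff_ofReal hYnn, htot]
    exact ENNReal.one_lt_top
  have hYone : ∫ ω, Y ω ∂P = 1 := by
    rw [integral_eq_lintegral_of_nonneg_ae hYnn hYsm, htot, ENNReal.toReal_one]
  have hYpos : ∀ᵐ ω ∂P, 0 < Y ω := by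
    filter_upwards [hZcpos, hZc'pos, hZ'posall] with ω h1 h2 h3
    have hω : ω ∈ ⋃ i, F i := by rw [hFcover]; exact Set.mem_univ ω
    obtain ⟨i, hi⟩ := Set.mem_iUnion.mp hω
    have hYω : Y ω = (P[Z|ℱ t]) ω / (P[Z' i|ℱ t]) ω * Z' i ω := by
      simp only [hYdef]
      rw [Finset.sum_eq_single_of_mem i (Finset.mem_univ i), Set.indicator_of_mem hi]
      intro j _ hji
      exact Set.indicator_of_notMem
        (fun hj => Set.disjoint_left.mp (hFdisj hji) hj hi) _
    rw [hYω]
    exact mul_pos (div_pos h1 (h2 i)) (h3 i)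
  haveI hQYfin : IsFiniteMeasure QY := aux_finite hYint hYnn hYone
  have hQYP : QY ≪ P := withDensity_absolutelyContinuous _ _
  have hPQY : P ≪ QY := by
    refine Measure.AbsolutelyContinuous.mk fun A hA h0 => ?_
    have h0' : ∫⁻ ω in A, ENNReal.ofReal (Y ω) ∂P = 0 := by
      rw [← withDensity_apply _ hA]
      exact h0
    have hae0 : ∀ᵐ ω ∂P.restrict A, ENNReal.ofReal (Y ω) = 0 :=
      (lintegral_eq_zero_iff' (hYsm.aemeasurable.ennreal_ofReal.restrict)).mp h0'
    have hposA : ∀ᵐ ω ∂P.restrict A, 0 < Y ω := ae_restrict_of_ae hYpos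
    have hfalse : ∀ᵐ _ω ∂P.restrict A, False := by
      filter_upwards [hae0, hposA] with ω e p
      rw [ENNReal.ofReal_eq_zero] at e
      linarith
    have hr0 : P.restrict A = 0 := by
      rwa [Filter.eventually_false_iff_eq_bot, ae_eq_bot] at hfalse
    rwa [Measure.restrict_eq_zero] at hr0
  refine ⟨hYint, hYpos, hYone, ?_⟩
  intro j s u hsu huT
  have hsT : s ≤ T := hsu.trans huT
  have hkeyL : ∀ v, s ≤ v → v ≤ T → ∀ A : Set Ω, MeasurableSet[ℱ s] A →
      ∫⁻ ω, A.indicator (fun ω => ENNReal.ofReal (S v ω j)) ω ∂QY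
        = ∫⁻ ω, A.indicator (fun ω => ENNReal.ofReal (S s ω j)) ω ∂QY := by
    intro v hsv hvT A hA
    have hA0 : MeasurableSet[mΩ] A := ℱ.le s A hA
    have hSm : ∀ x, x ≤ T → Measurable fun ω => ENNReal.ofReal (S x ω j) := fun x hx =>
      ((hSadapted x hx j).mono (ℱ.le x) le_rfl).ennreal_ofReal
    set χ : Ω → ℝ≥0∞ := A.indicator (fun _ => 1) with hχdef
    have hχs : Measurable[ℱ s] χ := measurable_const.indicator hA
    have hfact : ∀ (g : Ω → ℝ≥0∞) (ω : Ω), A.indicator g ω = χ ω * g ω := by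
      intro g ω
      by_cases hω : ω ∈ A
      · simp [hχdef, Set.indicator_of_mem hω]
      · simp [hχdef, Set.indicator_of_notMem hω]
    have hwmeas : ∀ x, x ≤ T →
        Measurable (A.indicator fun ω => ENNReal.ofReal (S x ω j)) :=
      fun x hx => (hSm x hx).indicator hA0
    rcases le_total t s with hts | hst
    · rw [H1 _ (hwmeas v hvT), H1 _ (hwmeas s hsT)]
      refine Finset.sum_congr rfl fun i _ => ?_
      have hmeas : Measurable[ℱ s] fun ω => G i ω * χ ω :=
        ((hGmeas i).mono (ℱ.mono hts) le_rfl).mul hχs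
      calc ∫⁻ ω, G i ω * A.indicator (fun ω => ENNReal.ofReal (S v ω j)) ω ∂(Qi i)
          = ∫⁻ ω, (fun ω => G i ω * χ ω) ω * ENNReal.ofReal (S v ω j) ∂(Qi i) :=
            lintegral_congr fun ω => by rw [hfact]; ring
        _ = ∫⁻ ω, (fun ω => G i ω * χ ω) ω * ENNReal.ofReal (S s ω j) ∂(Qi i) :=
            aux_mart hSbdd hSpos hSadapted (hZ' i) j hsv hvT hmeas
        _ = ∫⁻ ω, G i ω * A.indicator (fun ω => ENNReal.ofReal (S s ω j)) ω ∂(Qi i) :=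
            lintegral_congr fun ω => by rw [hfact]; ring
    · have hAt : MeasurableSet[ℱ t] A := (ℱ.mono hst) A hA
      have hχt : Measurable[ℱ t] χ := measurable_const.indicator hAt
      have hred : ∀ x, s ≤ x → x ≤ T →
          ∫⁻ ω, A.indicator (fun ω => ENNReal.ofReal (S x ω j)) ω ∂QY
            = ∫⁻ ω, χ ω * ENNReal.ofReal (S (min x t) ω j) ∂Q := by
        intro x hsx hxT
        rcases le_total x t with hxt | htx
        · rw [min_eq_left hxt, H1 _ (hwmeas x hxT)]
          have hwt : Measurable[ℱ t] (A.indicator fun ω => ENNReal.ofReal (S x ω j)) :=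
            (((hSadapted x hxT j).mono (ℱ.mono hxt) le_rfl).ennreal_ofReal).indicator hAt
          rw [H2 _ hwt]
          exact lintegral_congr fun ω => hfact _ ω
        · rw [min_eq_right htx, H1 _ (hwmeas x hxT)]
          have step : ∀ i,
              ∫⁻ ω, G i ω * A.indicator (fun ω => ENNReal.ofReal (S x ω j)) ω ∂(Qi i)
                = ∫⁻ ω, G i ω * (χ ω * ENNReal.ofReal (S t ω j)) ∂(Qi i) := by
            intro i
            have hmeas : Measurable[ℱ t] fun ω => G i ω * χ ω := (hGmeas i).mul hχt
            calc ∫⁻ ω, G i ω * A.indicator (fun ω => ENNReal.ofReal (S x ω j)) ω ∂(Qi i)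
                = ∫⁻ ω, (fun ω => G i ω * χ ω) ω * ENNReal.ofReal (S x ω j) ∂(Qi i) :=
                  lintegral_congr fun ω => by rw [hfact]; ring
              _ = ∫⁻ ω, (fun ω => G i ω * χ ω) ω * ENNReal.ofReal (S t ω j) ∂(Qi i) :=
                  aux_mart hSbdd hSpos hSadapted (hZ' i) j htx hxT hmeas
              _ = ∫⁻ ω, G i ω * (χ ω * ENNReal.ofReal (S t ω j)) ∂(Qi i) :=
                  lintegral_congr fun ω => by ring
          rw [Finset.sum_congr rfl fun i _ => step i]
          exact H2 _ (hχt.mul ((hSadapted t ht j).ennreal_ofReal))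
      rw [hred v hsv hvT, hred s le_rfl hsT, min_eq_left hst]
      exact aux_mart hSbdd hSpos hSadapted hZ j (le_min hsv hst)
        ((min_le_right v t).trans ht) hχs
  have hSintQY : ∀ x, x ≤ T → Integrable (fun ω => S x ω j) QY := fun x hx =>
    aux_int (((hSadapted x hx j).mono (ℱ.le x) le_rfl).stronglyMeasurable)
      (hSbdd x hx j) hQYP
  have hSnnQY : ∀ x, x ≤ T → 0 ≤ᵐ[QY] fun ω => S x ω j := fun x hx =>
    ((hSpos x hx j).mono fun ω h => h.le).filter_mono hQYP.ae_le
  have hg_eq : ∀ A : Set Ω, MeasurableSet[ℱ s] A → QY A < ⊤ →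
      ∫ ω in A, S s ω j ∂QY = ∫ ω in A, S u ω j ∂QY := by
    intro A hA _
    have hA0 : MeasurableSet[mΩ] A := ℱ.le s A hA
    have h1 := hkeyL u hsu huT A hA
    rw [lintegral_indicator hA0, lintegral_indicator hA0] at h1
    rw [integral_eq_lintegral_of_nonneg_ae (ae_restrict_of_ae (hSnnQY s hsT))
        (((hSadapted s hsT j).mono (ℱ.le s) le_rfl).stronglyMeasurable.aestronglyMeasurable),
      integral_eq_lintegral_of_nonneg_ae (ae_restrict_of_ae (hSnnQY u huT))
        (((hSadapted u huT j).mono (ℱ.le u) le_rfl).stronglyMeasurable.aestronglyMeasurable),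
      h1]
  have hmain := ae_eq_condExp_of_forall_setIntegral_eq (μ := QY) (ℱ.le s) (hSintQY u huT)
    (fun A hA hfin => (hSintQY s hsT).integrableOn) hg_eq
    (((hSadapted s hsT j).stronglyMeasurable).aestronglyMeasurable)
  exact (hPQY.ae_eq hmain).symm
end

section
/- Let B be a weak*-closed convex cone in L^∞(F; ℝ^d) and V = (v₁,…,v_d) strictly positive bounded random variables with bounded reciprocals, v₁ ≡ 1. Define B·V = {X·V : X ∈ B} and (B·V)(V) = {X : X·V ∈ B·V}. Then B ⊆ (B·V)(V), and B = (B·V)(V) if and only if α(v_j e_i − v_i e_j) ∈ B for all α ∈ L^∞₊(F) and all i, j. Moreover, in that case B·V is weak*-closed in L^∞(F). -/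
open MeasureTheory Filter

private lemma memtop_bound {Ω : Type} {mΩ : MeasurableSpace Ω} {P : Measure Ω} {f : Ω → ℝ}
    (hf : MemLp f ⊤ P) : ∃ C : ℝ, 0 ≤ C ∧ ∀ᵐ ω ∂P, ‖f ω‖ ≤ C := by
  refine ⟨(eLpNormEssSup f P).toReal, ENNReal.toReal_nonneg, ?_⟩
  have h := enorm_ae_le_eLpNormEssSup f P
  have hfin : eLpNormEssSup f P ≠ ⊤ := by
    have h2 := hf.2
    rw [eLpNorm_exponent_top] at h2
    exact h2.ne
  filter_upwards [h] with ω hω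
  have := ENNReal.toReal_mono hfin hω
  simpa using this

private lemma mul_int {Ω : Type} {mΩ : MeasurableSpace Ω} {P : Measure Ω} {f g : Ω → ℝ}
    (hf : MemLp f ⊤ P) (hg : Integrable g P) : Integrable (fun ω => f ω * g ω) P := by
  obtain ⟨C, _, hC⟩ := memtop_bound hf
  exact hg.bdd_mul hf.aestronglyMeasurable hC

private lemma mul_memtop {Ω : Type} {mΩ : MeasurableSpace Ω} {P : Measure Ω} {f g : Ω → ℝ}
    (hf : MemLp f ⊤ P) (hg : MemLp g ⊤ P) : MemLp (fun ω => f ω * g ω) ⊤ P := by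
  obtain ⟨C, hC0, hC⟩ := memtop_bound hf
  obtain ⟨D, hD0, hD⟩ := memtop_bound hg
  refine memLp_top_of_bound (hf.aestronglyMeasurable.mul hg.aestronglyMeasurable) (C * D) ?_
  filter_upwards [hC, hD] with ω h1 h2
  calc ‖f ω * g ω‖ = ‖f ω‖ * ‖g ω‖ := norm_mul _ _
    _ ≤ C * D := mul_le_mul h1 h2 (norm_nonneg _) hC0

/-- for a weak*-closed convex cone `B ⊂ L^∞(ℝ^d)` (encoded by the bipolar
condition `B = B**` in the duality `(L^∞, L¹)`) and a vector `V` of strictly positive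
bounded assets with bounded reciprocals and `V₁ ≡ 1`:
`B ⊆ (B·V)(V)`; `B = (B·V)(V)` iff `α(v_j e_i − v_i e_j) ∈ B` for all `α ∈ L^∞₊` and
all `i, j`; and in that case `B·V` is weak*-closed (it equals its bipolar). -/
theorem stmt15 {Ω : Type} {mΩ : MeasurableSpace Ω} (P : Measure Ω) [IsProbabilityMeasure P]
    (d : ℕ) (hd : 0 < d)
    (B : Set (Fin d → Ω → ℝ))
    (hBsub : ∀ X ∈ B, ∀ i, MemLp (X i) ⊤ P)
    -- B is a weak*-closed convex cone: B equals its bipolar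
    (hBclosed : B = {X : Fin d → Ω → ℝ | (∀ i, MemLp (X i) ⊤ P) ∧
        ∀ W : Fin d → Ω → ℝ, (∀ i, Integrable (W i) P) →
          (∀ Y ∈ B, ∫ ω, ∑ i, Y i ω * W i ω ∂P ≤ 0) →
          ∫ ω, ∑ i, X i ω * W i ω ∂P ≤ 0})
    (V : Fin d → Ω → ℝ)
    (hVbdd : ∀ i, MemLp (V i) ⊤ P)
    (hVpos : ∀ i, ∀ᵐ ω ∂P, 0 < V i ω)
    (hVinv : ∀ i, MemLp (fun ω => (V i ω)⁻¹) ⊤ P)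
    (hV1 : V ⟨0, hd⟩ = fun _ => 1) :
    -- (B·V)(V) = {X ∈ L^∞(ℝ^d) : X·V ∈ B·V}
    (let BVV : Set (Fin d → Ω → ℝ) := {X | (∀ i, MemLp (X i) ⊤ P) ∧
        ∃ Y ∈ B, (fun ω => ∑ i, X i ω * V i ω) = fun ω => ∑ i, Y i ω * V i ω};
     B ⊆ BVV ∧
     ((B = BVV) ↔
       (∀ α : Ω → ℝ, MemLp α ⊤ P → (0 : Ω → ℝ) ≤ᵐ[P] α → ∀ i j : Fin d,
         (fun k ω => α ω * (V j ω * (if k = i then (1 : ℝ) else 0)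
            - V i ω * (if k = j then (1 : ℝ) else 0))) ∈ B)) ∧
     ((B = BVV) →
       {x : Ω → ℝ | ∃ Y ∈ B, x = fun ω => ∑ i, Y i ω * V i ω}
         = {x : Ω → ℝ | MemLp x ⊤ P ∧ ∀ Z : Ω → ℝ, Integrable Z P →
             (∀ y : Ω → ℝ, (∃ Y ∈ B, y = fun ω => ∑ i, Y i ω * V i ω) →
               ∫ ω, Z ω * y ω ∂P ≤ 0) →
             ∫ ω, Z ω * x ω ∂P ≤ 0})) := by
  intro BVV
  -- zero is in B
  have h0B : (fun (_ : Fin d) (_ : Ω) => (0 : ℝ)) ∈ B := by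
    rw [hBclosed]
    refine ⟨fun i => memLp_top_const 0, fun W hW hpol => ?_⟩
    simp
  -- B is closed under addition
  have haddB : ∀ X ∈ B, ∀ Y ∈ B, (fun k ω => X k ω + Y k ω) ∈ B := by
    intro X hX Y hY
    rw [hBclosed]
    refine ⟨fun i => ((hBsub X hX i).add (hBsub Y hY i)), fun W hW hpol => ?_⟩
    have hXW : Integrable (fun ω => ∑ i, X i ω * W i ω) P :=
      integrable_finset_sum _ fun i _ => mul_int (hBsub X hX i) (hW i)
    have hYW : Integrable (fun ω => ∑ i, Y i ω * W i ω) P :=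
      integrable_finset_sum _ fun i _ => mul_int (hBsub Y hY i) (hW i)
    have heq : (fun ω => ∑ i, (X i ω + Y i ω) * W i ω)
        = fun ω => (∑ i, X i ω * W i ω) + ∑ i, Y i ω * W i ω := by
      funext ω
      rw [← Finset.sum_add_distrib]
      exact Finset.sum_congr rfl fun i _ => add_mul _ _ _
    calc ∫ ω, ∑ i, (X i ω + Y i ω) * W i ω ∂P
        = ∫ ω, ((∑ i, X i ω * W i ω) + ∑ i, Y i ω * W i ω) ∂P := by rw [heq]
      _ = (∫ ω, ∑ i, X i ω * W i ω ∂P) + ∫ ω, ∑ i, Y i ω * W i ω ∂P :=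
          integral_add hXW hYW
      _ ≤ 0 := add_nonpos (hpol X hX) (hpol Y hY)
  -- B is closed under finite sums
  have hsumB : ∀ (s : Finset (Fin d)) (f : Fin d → (Fin d → Ω → ℝ)),
      (∀ i, f i ∈ B) → (fun k ω => ∑ i ∈ s, f i k ω) ∈ B := by
    intro s
    induction s using Finset.induction_on with
    | empty => intro f hf; simpa using h0B
    | @insert a s hnot ih =>
      intro f hf
      have := haddB (f a) (hf a) _ (ih f hf)
      simpa [Finset.sum_insert hnot] using this
  -- part 1
  have hsub : B ⊆ BVV := fun X hX => ⟨hBsub X hX, X, hX, rfl⟩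
  refine ⟨hsub, ?_, ?_⟩
  · constructor
    · -- forward: B = BVV implies generators in B
      intro hBeq α hα hα0 i j
      rw [hBeq]
      refine ⟨?_, (fun _ _ => 0), h0B, ?_⟩
      · intro k
        exact mul_memtop hα ((mul_memtop (hVbdd j) (memLp_top_const _)).sub
          (mul_memtop (hVbdd i) (memLp_top_const _)))
      · funext ω
        simp only [zero_mul, Finset.sum_const_zero]
        have hterm : ∀ k : Fin d,
            α ω * (V j ω * (if k = i then (1:ℝ) else 0)
              - V i ω * (if k = j then (1:ℝ) else 0)) * V k ω
            = (if k = i then α ω * V j ω * V k ω else 0)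
              - (if k = j then α ω * V i ω * V k ω else 0) := by
          intro k; split_ifs <;> ring
        rw [Finset.sum_congr rfl fun k _ => hterm k, Finset.sum_sub_distrib,
          Finset.sum_ite_eq', Finset.sum_ite_eq']
        simp [mul_comm, mul_assoc, mul_left_comm]
    · -- backward
      intro hgen
      have hgen' : ∀ β : Ω → ℝ, MemLp β ⊤ P → ∀ i j : Fin d,
          (fun k ω => β ω * (V j ω * (if k = i then (1 : ℝ) else 0)
            - V i ω * (if k = j then (1 : ℝ) else 0))) ∈ B := by
        intro β hβ i j
        have hp := hgen (fun ω => max (β ω) 0) hβ.pos_part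
          (Eventually.of_forall fun ω => le_max_right _ _) i j
        have hm := hgen (fun ω => max (-β ω) 0) hβ.neg_part
          (Eventually.of_forall fun ω => le_max_right _ _) j i
        have := haddB _ hp _ hm
        have heq : (fun k ω =>
            (max (β ω) 0) * (V j ω * (if k = i then (1:ℝ) else 0)
              - V i ω * (if k = j then (1:ℝ) else 0))
            + (max (-β ω) 0) * (V i ω * (if k = j then (1:ℝ) else 0)
              - V j ω * (if k = i then (1:ℝ) else 0)))
            = fun k ω => β ω * (V j ω * (if k = i then (1:ℝ) else 0)
              - V i ω * (if k = j then (1:ℝ) else 0)) := by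
          funext k ω
          have h1 : max (β ω) 0 - max (-β ω) 0 = β ω :=
            max_zero_sub_max_neg_zero_eq_self _
          conv_rhs => rw [← h1]
          ring
        rw [← heq]
        exact this
      refine Set.Subset.antisymm hsub ?_
      rintro X ⟨hXb, Y, hY, hXY⟩
      -- X = Y + ∑ i, (X i - Y i)·(V₀ e_i − V i e₀)
      have hmem : ∀ i : Fin d,
          (fun k ω => (X i ω - Y i ω) * (V (⟨0, hd⟩ : Fin d) ω * (if k = i then (1:ℝ) else 0)
            - V i ω * (if k = (⟨0, hd⟩ : Fin d) then (1:ℝ) else 0))) ∈ B :=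
        fun i => hgen' (fun ω => X i ω - Y i ω) ((hXb i).sub (hBsub Y hY i)) i ⟨0, hd⟩
      have hS := hsumB Finset.univ _ hmem
      have hfin := haddB Y hY _ hS
      have heq : (fun k ω => Y k ω + ∑ i : Fin d,
          (X i ω - Y i ω) * (V (⟨0, hd⟩ : Fin d) ω * (if k = i then (1:ℝ) else 0)
            - V i ω * (if k = (⟨0, hd⟩ : Fin d) then (1:ℝ) else 0))) = X := by
        funext k ω
        have h0 : ∑ i, (X i ω - Y i ω) * V i ω = 0 := by
          have h := congrFun hXY ω
          simp only [sub_mul, Finset.sum_sub_distrib]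
          rw [h, sub_self]
        have hv : V (⟨0, hd⟩ : Fin d) ω = 1 := by rw [hV1]
        have hterm : ∀ i : Fin d,
            (X i ω - Y i ω) * (V (⟨0, hd⟩ : Fin d) ω * (if k = i then (1:ℝ) else 0)
              - V i ω * (if k = (⟨0, hd⟩ : Fin d) then (1:ℝ) else 0))
            = (if k = i then X i ω - Y i ω else 0)
              - (if k = (⟨0, hd⟩ : Fin d) then (X i ω - Y i ω) * V i ω else 0) := by
          intro i; split_ifs <;> simp [hv] <;> ring
        rw [Finset.sum_congr rfl fun i _ => hterm i, Finset.sum_sub_distrib,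
          Finset.sum_ite_eq]
        by_cases hk : k = (⟨0, hd⟩ : Fin d) <;> simp [hk, h0]
      rw [← heq]
      exact hfin
  · -- part 3
    intro hBeq
    ext x
    constructor
    · rintro ⟨Y, hY, rfl⟩
      refine ⟨?_, fun Z hZ hpol => hpol _ ⟨Y, hY, rfl⟩⟩
      exact memLp_finset_sum _ fun i _ => mul_memtop (hBsub Y hY i) (hVbdd i)
    · rintro ⟨hx, hpol⟩
      set X : Fin d → Ω → ℝ := fun k ω => if k = (⟨0, hd⟩ : Fin d) then x ω else 0 with hXdef
      have hXB : X ∈ B := by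
        rw [hBclosed]
        constructor
        · intro i
          by_cases h : i = (⟨0, hd⟩ : Fin d) <;> simp only [hXdef, h, if_pos, if_neg,
            if_true, if_false]
          · exact hx
          · exact memLp_top_const 0
        · intro W hW hpolB
          have hsimp : (fun ω => ∑ i, X i ω * W i ω)
              = fun ω => x ω * W (⟨0, hd⟩ : Fin d) ω := by
            funext ω
            simp only [hXdef, ite_mul, zero_mul]
            rw [Finset.sum_ite_eq']
            simp
          rw [hsimp]
          have key : ∀ y : Ω → ℝ, (∃ Y ∈ B, y = fun ω => ∑ i, Y i ω * V i ω) →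
              ∫ ω, W (⟨0, hd⟩ : Fin d) ω * y ω ∂P ≤ 0 := by
            rintro y ⟨Y, hY, rfl⟩
            set Y' : Fin d → Ω → ℝ := fun k ω => if k = (⟨0, hd⟩ : Fin d)
              then (∑ i, Y i ω * V i ω) else 0 with hY'def
            have hY'B : Y' ∈ B := by
              rw [hBeq]
              constructor
              · intro i
                by_cases h : i = (⟨0, hd⟩ : Fin d) <;> simp only [hY'def, h, if_pos, if_neg,
                  if_true, if_false]
                · exact memLp_finset_sum _ fun i _ => mul_memtop (hBsub Y hY i) (hVbdd i)
                · exact memLp_top_const 0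
              · refine ⟨Y, hY, ?_⟩
                funext ω
                simp only [hY'def, ite_mul, zero_mul]
                rw [Finset.sum_ite_eq']
                simp [hV1]
            have := hpolB Y' hY'B
            have hsimp2 : (fun ω => ∑ i, Y' i ω * W i ω)
                = fun ω => W (⟨0, hd⟩ : Fin d) ω * (∑ i, Y i ω * V i ω) := by
              funext ω
              simp only [hY'def, ite_mul, zero_mul]
              rw [Finset.sum_ite_eq']
              simp [mul_comm]
            rwa [hsimp2] at this
          have := hpol (W (⟨0, hd⟩ : Fin d)) (hW _) key
          calc ∫ ω, x ω * W (⟨0, hd⟩ : Fin d) ω ∂P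
              = ∫ ω, W (⟨0, hd⟩ : Fin d) ω * x ω ∂P := by
                congr 1; funext ω; ring
            _ ≤ 0 := this
      refine ⟨X, hXB, ?_⟩
      funext ω
      simp only [hXdef, ite_mul, zero_mul]
      rw [Finset.sum_ite_eq']
      simp [hV1]
end

section
/- Let Ω = {1,2,3,4}, ℙ uniform, F₀ trivial, F₁ = σ({1,2},{3,4}), F₂ = 2^Ω, and Q = co((¼,¼,¼,¼), (¼,¼,⅜,⅛), (⅜,⅛,¼,¼), (⅜,⅛,⅜,⅛)) (probability mass vectors). Define ρ(X) = max_{Q∈Q} E_Q[X] and ρ₁(X) = ess-sup_{Q∈Q} E_Q(X|F₁). Then ρ ∘ ρ₁ = ρ, i.e., ρ is time-consistent. -/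
set_option maxHeartbeats 2000000 in
/-- in the binary-branching example with
`Q = co((¼,¼,¼,¼),(¼,¼,⅜,⅛),(⅜,⅛,¼,¼),(⅜,⅛,⅜,⅛))`, the coherent risk measure
`ρ(X) = max_{Q∈Q} E_Q[X]` is time-consistent: `ρ ∘ ρ₁ = ρ`. -/
theorem stmt18 :
    let E : (Fin 4 → ℝ) → (Fin 4 → ℝ) → ℝ := fun q x => ∑ i, q i * x i
    let Q1 : Fin 4 → ℝ := ![1/4, 1/4, 1/4, 1/4]
    let Q2 : Fin 4 → ℝ := ![1/4, 1/4, 3/8, 1/8]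
    let Q3 : Fin 4 → ℝ := ![3/8, 1/8, 1/4, 1/4]
    let Q4 : Fin 4 → ℝ := ![3/8, 1/8, 3/8, 1/8]
    -- ρ(X) = sup over co(Q₁,…,Q₄) of E_Q X = max of the generator expectations
    let ρ : (Fin 4 → ℝ) → ℝ := fun x => max (max (E Q1 x) (E Q2 x)) (max (E Q3 x) (E Q4 x))
    -- ρ₁(X) = ess-sup over Q of E_Q(X|F₁), F₁ = σ({1,2},{3,4})
    let ρ₁ : (Fin 4 → ℝ) → (Fin 4 → ℝ) := fun x =>
      ![max ((3 * x 0 + x 1) / 4) ((x 0 + x 1) / 2),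
        max ((3 * x 0 + x 1) / 4) ((x 0 + x 1) / 2),
        max ((3 * x 2 + x 3) / 4) ((x 2 + x 3) / 2),
        max ((3 * x 2 + x 3) / 4) ((x 2 + x 3) / 2)]
    -- conclusion: ρ ∘ ρ₁ = ρ, i.e. ρ is (weakly) time-consistent
    ∀ x : Fin 4 → ℝ, ρ (ρ₁ x) = ρ x := by
  intro E Q1 Q2 Q3 Q4 ρ ρ₁ x
  simp only [E, Q1, Q2, Q3, Q4, ρ, ρ₁, Fin.sum_univ_four, Matrix.cons_val_zero,
    Matrix.cons_val_one, Matrix.head_cons, Matrix.cons_val_two, Matrix.tail_cons,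
    Matrix.cons_val_three, Matrix.head_fin_const]
  rcases le_total ((3 * x 0 + x 1) / 4) ((x 0 + x 1) / 2) with h1 | h1 <;>
    rcases le_total ((3 * x 2 + x 3) / 4) ((x 2 + x 3) / 2) with h2 | h2 <;>
    simp only [max_eq_right h1, max_eq_left h1, max_eq_right h2, max_eq_left h2] <;>
    apply le_antisymm <;>
    · refine max_le (max_le ?_ ?_) (max_le ?_ ?_) <;>
        first
          | exact le_max_of_le_left (le_max_of_le_left (by linarith))
          | exact le_max_of_le_left (le_max_of_le_right (by linarith))
          | exact le_max_of_le_right (le_max_of_le_left (by linarith))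
          | exact le_max_of_le_right (le_max_of_le_right (by linarith))
end

section
/- Let Ω = [1,2]^{[0,1]} with product σ-algebra and product of Lebesgue measures ℙ, X a coordinate random variable with uniform [1,2] law, and suppose (Xₙ) is a uniformly bounded sequence converging weak* to X in L^∞ and (Wₙ) a sequence of random variables each independent of X with Xₙ ≤ Wₙ a.s. and E[X] = liminf E[Wₙ]. Then a contradiction follows; specifically, one derives E[X] ≥ ‖X‖_{L^{2p}} for all p ∈ ℕ, hence 3/2 = E[X] ≥ ess-sup X = 2, which is false. -/
open MeasureTheory Filter ProbabilityTheory

/-- Counterexample 7.28: on a probability space carrying a random variable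
`X` uniformly distributed on `[1,2]` (e.g. a coordinate on `Ω = [1,2]^{[0,1]}` with the
product measure), suppose `(Xₙ)` is a uniformly bounded sequence converging weak* to `X`
in `L^∞` and `(Wₙ)` is a sequence of integrable random variables, each independent of
`X`, with `Xₙ ≤ Wₙ` a.s. and `E[X] = liminf E[Wₙ]`. Then a contradiction follows
(one derives `E[X] ≥ ‖X‖_{L^{2p}}` for all `p`, hence `3/2 ≥ ess-sup X = 2`). -/
theorem stmt19 {Ω : Type} {mΩ : MeasurableSpace Ω} (P : Measure Ω) [IsProbabilityMeasure P]
    (X : Ω → ℝ) (hXmeas : Measurable X)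
    -- X is uniformly distributed on [1,2]
    (hXlaw : Measure.map X P = volume.restrict (Set.Icc (1 : ℝ) 2))
    (Xn : ℕ → Ω → ℝ) (hXnmeas : ∀ n, Measurable (Xn n))
    -- (Xₙ) is uniformly bounded
    (C : ℝ) (hXnbdd : ∀ n, ∀ᵐ ω ∂P, |Xn n ω| ≤ C)
    -- (Xₙ) converges weak* to X in L^∞ = (L¹)*
    (hweak : ∀ Z : Ω → ℝ, Integrable Z P →
      Tendsto (fun n => ∫ ω, Z ω * Xn n ω ∂P) atTop (nhds (∫ ω, Z ω * X ω ∂P)))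
    (W : ℕ → Ω → ℝ) (hWint : ∀ n, Integrable (W n) P)
    -- each Wₙ is independent of X
    (hindep : ∀ n, IndepFun X (W n) P)
    -- Xₙ ≤ Wₙ a.s.
    (hle : ∀ n, Xn n ≤ᵐ[P] W n)
    -- E[X] = liminf E[Wₙ]
    (hE : ∫ ω, X ω ∂P = liminf (fun n => ∫ ω, W n ω ∂P) atTop) :
    False := by
  -- test function
  set g : ℝ → ℝ := Set.indicator (Set.Ici (7/4 : ℝ)) (fun _ => 1) with hgdef
  have hgmeas : Measurable g := measurable_const.indicator measurableSet_Ici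
  have hgbdd : ∀ x, ‖g x‖ ≤ 1 := by
    intro x
    simp only [hgdef, Set.indicator, Real.norm_eq_abs]
    split <;> simp
  have hgnonneg : ∀ x, 0 ≤ g x := fun x => Set.indicator_nonneg (fun _ _ => zero_le_one) x
  set Z : Ω → ℝ := fun ω => g (X ω) with hZdef
  have hZmeas : Measurable Z := hgmeas.comp hXmeas
  have hZint : Integrable Z P := by
    refine (integrable_const (1 : ℝ)).mono' hZmeas.aestronglyMeasurable ?_
    exact Filter.Eventually.of_forall fun ω => hgbdd (X ω)
  -- the set identity
  have hset : Set.Ici (7/4 : ℝ) ∩ Set.Icc (1 : ℝ) 2 = Set.Icc (7/4 : ℝ) 2 := by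
    ext x
    simp only [Set.mem_inter_iff, Set.mem_Ici, Set.mem_Icc]
    constructor
    · rintro ⟨h1, h2, h3⟩; exact ⟨h1, h3⟩
    · rintro ⟨h1, h2⟩; exact ⟨h1, by linarith, h2⟩
  -- E[X] = 3/2
  have hEX : ∫ ω, X ω ∂P = 3/2 := by
    have h1 : ∫ x, id x ∂(Measure.map X P) = ∫ ω, X ω ∂P := by
      rw [integral_map hXmeas.aemeasurable measurable_id.aestronglyMeasurable]
      simp [id_eq]
    rw [← h1, hXlaw]
    simp only [id_eq]
    rw [MeasureTheory.integral_Icc_eq_integral_Ioc,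
      ← intervalIntegral.integral_of_le (by norm_num : (1:ℝ) ≤ 2), integral_id]
    norm_num
  -- E[Z] = 1/4
  have hEZ : ∫ ω, Z ω ∂P = 1/4 := by
    have h1 : ∫ x, g x ∂(Measure.map X P) = ∫ ω, Z ω ∂P := by
      rw [integral_map hXmeas.aemeasurable hgmeas.aestronglyMeasurable]
    rw [← h1, hXlaw, hgdef,
      integral_indicator measurableSet_Ici, Measure.restrict_restrict measurableSet_Ici,
      hset, setIntegral_const]
    rw [Real.volume_real_Icc]
    norm_num
  -- E[Z X] = 15/32
  have hEZX : ∫ ω, Z ω * X ω ∂P = 15/32 := by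
    have hfun : ∀ x : ℝ, g x * x = Set.indicator (Set.Ici (7/4 : ℝ)) id x := by
      intro x
      simp only [hgdef, Set.indicator, id_eq]
      split <;> simp
    have hmeas' : Measurable (fun x : ℝ => g x * x) := hgmeas.mul measurable_id
    calc ∫ ω, Z ω * X ω ∂P = ∫ ω, (fun x => g x * x) (X ω) ∂P := rfl
      _ = ∫ x, g x * x ∂(Measure.map X P) :=
          (integral_map hXmeas.aemeasurable hmeas'.aestronglyMeasurable).symm
      _ = 15/32 := by
          rw [hXlaw]
          simp only [hfun]
          rw [integral_indicator measurableSet_Ici, Measure.restrict_restrict measurableSet_Ici,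
            hset]
          simp only [id_eq]
          rw [MeasureTheory.integral_Icc_eq_integral_Ioc,
            ← intervalIntegral.integral_of_le (by norm_num : (7/4:ℝ) ≤ 2), integral_id]
          norm_num
  -- key inequality: E[Z Xn] ≤ (1/4) E[Wn]
  have hkey : ∀ n, ∫ ω, Z ω * Xn n ω ∂P ≤ (1/4) * ∫ ω, W n ω ∂P := by
    intro n
    have hint1 : Integrable (fun ω => Z ω * Xn n ω) P := by
      refine (integrable_const (|C|) : Integrable (fun _ : Ω => |C|) P).mono'
        (hZmeas.mul (hXnmeas n)).aestronglyMeasurable ?_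
      filter_upwards [hXnbdd n] with ω hω
      have h1 : |Z ω| ≤ 1 := hgbdd (X ω)
      calc ‖Z ω * Xn n ω‖ = |Z ω| * |Xn n ω| := abs_mul _ _
        _ ≤ 1 * |C| := by
            exact mul_le_mul h1 (hω.trans (le_abs_self C)) (abs_nonneg _) zero_le_one
        _ = |C| := one_mul _
    have hint2 : Integrable (fun ω => Z ω * W n ω) P :=
      (hWint n).bdd_mul hZmeas.aestronglyMeasurable (c := 1) (Filter.Eventually.of_forall fun ω => hgbdd (X ω))
    have hmono : ∫ ω, Z ω * Xn n ω ∂P ≤ ∫ ω, Z ω * W n ω ∂P := by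
      refine integral_mono_ae hint1 hint2 ?_
      filter_upwards [hle n] with ω hω
      exact mul_le_mul_of_nonneg_left hω (hgnonneg (X ω))
    have hindepZ : IndepFun Z (W n) P := (hindep n).comp hgmeas measurable_id
    have hmul : ∫ ω, Z ω * W n ω ∂P = (∫ ω, Z ω ∂P) * ∫ ω, W n ω ∂P :=
      hindepZ.integral_mul_eq_mul_integral hZint.1 (hWint n).1
    rw [hmul, hEZ] at hmono
    exact hmono
  -- weak* convergence
  have hconv := hweak Z hZint
  rw [hEZX] at hconv
  set v : ℕ → ℝ := fun n => ∫ ω, W n ω ∂P with hvdef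
  have hliminfv : liminf v atTop = 3/2 := by rw [← hE, hEX]
  by_cases hcb : IsCoboundedUnder (· ≥ ·) atTop v
  · -- eventually 13/8 ≤ v n
    have hev : ∀ᶠ n in atTop, (13/8 : ℝ) ≤ v n := by
      have h1 : ∀ᶠ n in atTop, (13/32 : ℝ) < ∫ ω, Z ω * Xn n ω ∂P :=
        hconv.eventually (eventually_gt_nhds (by norm_num))
      filter_upwards [h1] with n hn
      have := hkey n
      linarith
    have := le_liminf_of_le hcb hev
    rw [hliminfv] at this
    norm_num at this
  · -- liminf is junk (= 0), contradicting liminf = 3/2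
    have : liminf v atTop = 0 := by
      have hnb : ¬ BddAbove {a : ℝ | ∀ᶠ n in atTop, a ≤ v n} := by
        intro ⟨b, hb⟩
        exact hcb ⟨b, fun a ha => hb ha⟩
      simp only [liminf, limsInf, eventually_map]
      exact Real.sSup_of_not_bddAbove hnb
    rw [this] at hliminfv
    norm_num at hliminfv
end
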